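/- The alternating series ∑_{k=1}^{∞} (-1)^{k-1} (1/(4k-3) - 1/(4k-1)) converges and its sum equals (√2/2) ln(1 + √2). -/

import Mathlib

open Real Filter Topology intervalIntegral Finset

private lemma s2 : Real.sqrt 2 ^ 2 = 2 := Real.sq_sqrt (by norm_num)

private lemma s_pos : (0:ℝ) < Real.sqrt 2 := Real.sqrt_pos.mpr (by norm_num)

private lemma s_lt_two : Real.sqrt 2 < 2 := by nlinarith [s2, s_pos]

noncomputable def Gfun (x : ℝ) : ℝ :=
  Real.sqrt 2 / 4 *
    (Real.log (x ^ 2 + Real.sqrt 2 * x + 1) - Real.log (x ^ 2 - Real.sqrt 2 * x + 1))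

private lemma posA (x : ℝ) : (0:ℝ) < x ^ 2 + Real.sqrt 2 * x + 1 := by
  nlinarith [sq_nonneg (2 * x + Real.sqrt 2), s2]

private lemma posB (x : ℝ) : (0:ℝ) < x ^ 2 - Real.sqrt 2 * x + 1 := by
  nlinarith [sq_nonneg (2 * x - Real.sqrt 2), s2]

private lemma hG (x : ℝ) : HasDerivAt Gfun ((1 - x ^ 2) / (1 + x ^ 4)) x := by
  have hs := s2
  set s := Real.sqrt 2 with hsdef
  have hA := posA x
  have hB := posB x
  have h1 : HasDerivAt (fun y : ℝ => y ^ 2 + s * y + 1) (2 * x + s) x := by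
    have := ((hasDerivAt_pow 2 x).add ((hasDerivAt_id x).const_mul s)).add_const 1
    exact this.congr_deriv (by ring)
  have h2 : HasDerivAt (fun y : ℝ => y ^ 2 - s * y + 1) (2 * x - s) x := by
    have := ((hasDerivAt_pow 2 x).sub ((hasDerivAt_id x).const_mul s)).add_const 1
    exact this.congr_deriv (by ring)
  have l1 := h1.log hA.ne'
  have l2 := h2.log hB.ne'
  have hD := ((l1.sub l2).const_mul (s / 4))
  refine hD.congr_deriv (Eq.symm ?_)
  have hden : (1:ℝ) + x ^ 4 = (x ^ 2 + s * x + 1) * (x ^ 2 - s * x + 1) := by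
    linear_combination x ^ 2 * hs
  rw [hden]
  have hA' : x * (x + s) + 1 ≠ 0 := by nlinarith
  have hB' : x * (x - s) + 1 ≠ 0 := by nlinarith
  field_simp
  ring_nf
  linear_combination (-2 * (1 - x ^ 2)) * hs

private lemma Ival :
    (∫ x in (0:ℝ)..1, (1 - x ^ 2) / (1 + x ^ 4))
      = Real.sqrt 2 / 2 * Real.log (1 + Real.sqrt 2) := by
  have hs := s2
  have hcont : Continuous fun x : ℝ => (1 - x ^ 2) / (1 + x ^ 4) := by
    apply Continuous.div (by continuity) (by continuity)
    intro x; positivity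
  rw [integral_eq_sub_of_hasDerivAt (fun x _ => hG x) (hcont.intervalIntegrable 0 1)]
  set s := Real.sqrt 2 with hsdef
  have h1 : Gfun 0 = 0 := by simp [Gfun]
  have h2 : Gfun 1 = s / 4 * (Real.log (2 + s) - Real.log (2 - s)) := by
    have e1 : (1:ℝ) ^ 2 + Real.sqrt 2 * 1 + 1 = 2 + Real.sqrt 2 := by ring
    have e2 : (1:ℝ) ^ 2 - Real.sqrt 2 * 1 + 1 = 2 - Real.sqrt 2 := by ring
    simp only [Gfun, e1, e2]
    rw [hsdef]
  have hlt := s_lt_two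
  have hpos := s_pos
  have key : Real.log (2 + s) = 2 * Real.log (1 + s) + Real.log (2 - s) := by
    have he : (2:ℝ) + s = (1 + s) ^ 2 * (2 - s) := by linear_combination s * hs
    rw [he, Real.log_mul (by positivity) (by nlinarith), Real.log_pow]
    push_cast; ring
  rw [h1, h2, key]; ring

/-- the series terms -/
noncomputable def aa (j : ℕ) : ℝ :=
  (-1 : ℝ) ^ j * (1 / (4 * (j:ℝ) + 1) - 1 / (4 * (j:ℝ) + 3))

private lemma term_cont (j : ℕ) :
    Continuous fun x : ℝ => (-1:ℝ) ^ j * (x ^ (4 * j) - x ^ (4 * j + 2)) := by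
  continuity

private lemma term_eq (j : ℕ) :
    aa j = ∫ x in (0:ℝ)..1, (-1:ℝ) ^ j * (x ^ (4 * j) - x ^ (4 * j + 2)) := by
  rw [integral_const_mul, integral_sub ((continuous_pow _).intervalIntegrable 0 1)
    ((continuous_pow _).intervalIntegrable 0 1), integral_pow, integral_pow]
  simp only [aa, one_pow, zero_pow (by omega : 4 * j + 1 ≠ 0),
    zero_pow (by omega : 4 * j + 2 + 1 ≠ 0)]
  push_cast; ring

private lemma partial_eq (n : ℕ) :
    ∑ j ∈ Finset.range n, aa j
      = ∫ x in (0:ℝ)..1, (1 - x ^ 2) * (1 - (-x ^ 4) ^ n) / (1 + x ^ 4) := by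
  have h1 : ∑ j ∈ Finset.range n, aa j
      = ∫ x in (0:ℝ)..1, ∑ j ∈ Finset.range n, (-1:ℝ) ^ j * (x ^ (4 * j) - x ^ (4 * j + 2)) := by
    rw [integral_finset_sum (fun i _ => (term_cont i).intervalIntegrable 0 1)]
    exact Finset.sum_congr rfl fun j _ => term_eq j
  rw [h1]
  apply integral_congr
  intro x _
  have h4 : (0:ℝ) < 1 + x ^ 4 := by positivity
  have hne : (-x ^ 4 : ℝ) ≠ 1 := by nlinarith [pow_nonneg (sq_nonneg x) 2, sq_nonneg (x^2)]
  have hterm : ∀ j, (-1:ℝ) ^ j * (x ^ (4 * j) - x ^ (4 * j + 2))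
      = (1 - x ^ 2) * (-x ^ 4) ^ j := by
    intro j
    rw [show (-x ^ 4 : ℝ) = (-1) * x ^ 4 by ring, mul_pow, ← pow_mul, pow_add]
    ring
  simp only [hterm]
  rw [← Finset.mul_sum, geom_sum_eq hne]
  have hne2 : (-x ^ 4 : ℝ) - 1 ≠ 0 := by nlinarith [sq_nonneg (x ^ 2)]
  field_simp
  ring

private lemma tail_bound (n : ℕ) :
    |∑ j ∈ Finset.range n, aa j
        - Real.sqrt 2 / 2 * Real.log (1 + Real.sqrt 2)| ≤ 1 / (4 * (n:ℝ) + 1) := by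
  have hc1 : Continuous fun x : ℝ => (1 - x ^ 2) * (1 - (-x ^ 4) ^ n) / (1 + x ^ 4) := by
    apply Continuous.div (by continuity) (by continuity)
    intro x; positivity
  have hc2 : Continuous fun x : ℝ => (1 - x ^ 2) / (1 + x ^ 4) := by
    apply Continuous.div (by continuity) (by continuity)
    intro x; positivity
  rw [partial_eq n, ← Ival,
    ← integral_sub (hc1.intervalIntegrable 0 1) (hc2.intervalIntegrable 0 1)]
  have habs := intervalIntegral.abs_integral_le_integral_abs
    (f := fun x : ℝ => (1 - x ^ 2) * (1 - (-x ^ 4) ^ n) / (1 + x ^ 4) - (1 - x ^ 2) / (1 + x ^ 4))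
    (a := 0) (b := 1) (μ := MeasureTheory.volume) (by norm_num)
  refine habs.trans ?_
  have hmono : (∫ x in (0:ℝ)..1,
      |(1 - x ^ 2) * (1 - (-x ^ 4) ^ n) / (1 + x ^ 4) - (1 - x ^ 2) / (1 + x ^ 4)|)
      ≤ ∫ x in (0:ℝ)..1, x ^ (4 * n) := by
    apply integral_mono_on (by norm_num)
      ((hc1.sub hc2).abs.intervalIntegrable 0 1)
      ((continuous_pow _).intervalIntegrable 0 1)
    intro x hx
    obtain ⟨hx0, hx1⟩ := hx
    have h4 : (0:ℝ) < 1 + x ^ 4 := by positivity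
    have he : (1 - x ^ 2) * (1 - (-x ^ 4) ^ n) / (1 + x ^ 4) - (1 - x ^ 2) / (1 + x ^ 4)
        = -((1 - x ^ 2) * (-x ^ 4) ^ n / (1 + x ^ 4)) := by
      field_simp; ring
    rw [Pi.sub_apply, he, abs_neg, abs_div, abs_mul, abs_pow, abs_neg,
      abs_of_nonneg (by positivity : (0:ℝ) ≤ x ^ 4), ← pow_mul,
      abs_of_nonneg (by nlinarith : (0:ℝ) ≤ 1 - x ^ 2),
      abs_of_pos h4, div_le_iff₀ h4]
    nlinarith [mul_nonneg (pow_nonneg hx0 (4 * n)) (by positivity : (0:ℝ) ≤ x ^ 4 + x ^ 2)]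
  refine hmono.trans ?_
  rw [integral_pow]
  simp only [one_pow, zero_pow (by omega : 4 * n + 1 ≠ 0)]
  push_cast
  rw [div_le_div_iff₀ (by positivity) (by positivity)]
  ring_nf
  nlinarith [Nat.cast_nonneg (α := ℝ) n]

private lemma summable_aa : Summable aa := by
  have hb : Summable fun j : ℕ => 2 / ((j:ℝ) + 1) ^ 2 := by
    have h0 : Summable fun n : ℕ => 1 / (n:ℝ) ^ 2 :=
      summable_one_div_nat_pow.mpr one_lt_two
    have h1 : Summable fun j : ℕ => 1 / ((j:ℝ) + 1) ^ 2 := by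
      have := (summable_nat_add_iff 1).mpr h0
      simpa [Nat.cast_add] using this
    simpa [div_eq_mul_inv, mul_comm] using h1.mul_left 2
  refine Summable.of_norm_bounded hb ?_
  intro j
  have ht0 : (0:ℝ) ≤ (j:ℝ) := Nat.cast_nonneg j
  have hp1 : (0:ℝ) < 4 * (j:ℝ) + 1 := by linarith
  have hp3 : (0:ℝ) < 4 * (j:ℝ) + 3 := by linarith
  have hd : 1 / (4 * (j:ℝ) + 1) - 1 / (4 * (j:ℝ) + 3)
      = 2 / ((4 * (j:ℝ) + 1) * (4 * (j:ℝ) + 3)) := by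
    field_simp; ring
  have : ‖aa j‖ = 2 / ((4 * (j:ℝ) + 1) * (4 * (j:ℝ) + 3)) := by
    rw [Real.norm_eq_abs, aa, abs_mul, abs_pow, abs_neg, abs_one, one_pow, one_mul, hd,
      abs_of_pos (by positivity)]
  rw [this, div_le_div_iff₀ (by positivity) (by positivity)]
  nlinarith

theorem alternating_series_sum :
    HasSum
      (fun j : ℕ =>
        (-1 : ℝ) ^ ((j + 1) - 1)
          * (1 / (4 * ((j : ℝ) + 1) - 3) - 1 / (4 * ((j : ℝ) + 1) - 1)))
      (Real.sqrt 2 / 2 * Real.log (1 + Real.sqrt 2)) := by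
  have hfun : (fun j : ℕ =>
        (-1 : ℝ) ^ ((j + 1) - 1)
          * (1 / (4 * ((j : ℝ) + 1) - 3) - 1 / (4 * ((j : ℝ) + 1) - 1))) = aa := by
    funext j
    simp only [aa, Nat.add_sub_cancel]
    have e1 : 4 * ((j:ℝ) + 1) - 3 = 4 * (j:ℝ) + 1 := by ring
    have e2 : 4 * ((j:ℝ) + 1) - 1 = 4 * (j:ℝ) + 3 := by ring
    rw [e1, e2]
  rw [hfun]
  have h1 := summable_aa.hasSum
  have h2 := h1.tendsto_sum_nat
  have hlim : Tendsto (fun n : ℕ => 1 / (4 * (n:ℝ) + 1)) atTop (𝓝 0) := by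
    have hm : Tendsto (fun n : ℕ => 4 * (n:ℝ) + 1) atTop atTop := by
      apply Filter.tendsto_atTop_add_const_right
      exact tendsto_natCast_atTop_atTop.const_mul_atTop (by norm_num)
    simpa [one_div, Pi.inv_def] using hm.inv_tendsto_atTop
  have ht : Tendsto (fun n => ∑ j ∈ Finset.range n, aa j) atTop
      (𝓝 (Real.sqrt 2 / 2 * Real.log (1 + Real.sqrt 2))) := by
    rw [← tendsto_sub_nhds_zero_iff]
    exact squeeze_zero_norm tail_bound hlim
  have := tendsto_nhds_unique h2 ht
  rwa [this] at h1
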